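/- A maximal ideal M of C(X) is countable strongly annihilated if and only if M is both a z°-ideal and a real maximal ideal. -/
import Mathlib

open ContinuousMap

/-- An ideal `I` is countable strongly annihilated if for each countable subset `S ⊆ I`
and each `b ∉ I` there exists `c` with `c * a = 0` for all `a ∈ S` but `c * b ≠ 0`. -/
def CountableStronglyAnnihilated {R : Type*} [CommRing R] (I : Ideal R) : Prop :=
  ∀ S : Set R, S.Countable → S ⊆ I → ∀ b ∉ I, ∃ c : R, (∀ a ∈ S, c * a = 0) ∧ c * b ≠ 0

namespace Stmt15Aux

variable {X : Type*} [TopologicalSpace X]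

/-- a nowhere vanishing continuous function is a unit -/
theorem isUnit_of_ne_zero {f : C(X, ℝ)} (h : ∀ x, f x ≠ 0) : IsUnit f := by
  refine isUnit_iff_exists_inv.2 ⟨⟨fun x => (f x)⁻¹, f.continuous.inv₀ h⟩, ?_⟩
  ext x
  exact mul_inv_cancel₀ (h x)

variable {M : Ideal C(X, ℝ)}

theorem zero_ex {f : C(X, ℝ)} (hMne : M ≠ ⊤) (hf : f ∈ M) : ∃ x, f x = 0 := by
  by_contra h
  push_neg at h
  exact hMne (M.eq_top_of_isUnit_mem hf (isUnit_of_ne_zero h))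

theorem zero_ex2 {f g : C(X, ℝ)} (hMne : M ≠ ⊤) (hf : f ∈ M) (hg : g ∈ M) :
    ∃ x, f x = 0 ∧ g x = 0 := by
  obtain ⟨x, hx⟩ := zero_ex hMne (M.add_mem (M.mul_mem_left f hf) (M.mul_mem_left g hg))
  have hx' : f x * f x + g x * g x = 0 := by
    simpa using hx
  exact ⟨x, by nlinarith [mul_self_nonneg (f x), mul_self_nonneg (g x)], by
    nlinarith [mul_self_nonneg (f x), mul_self_nonneg (g x)]⟩

/-- Lemma A : if `b ∉ M` then some member of `M` has zero-set disjoint from that of `b`. -/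
theorem lemA (hM : M.IsMaximal) {b : C(X, ℝ)} (hb : b ∉ M) : ∃ m ∈ M, ∀ x, m x = 0 → b x ≠ 0 := by
  obtain ⟨y, i, hi, hyi⟩ := hM.exists_inv hb
  refine ⟨i, hi, fun x hix hbx => ?_⟩
  have := DFunLike.congr_fun hyi x
  simp only [ContinuousMap.add_apply, ContinuousMap.mul_apply, ContinuousMap.one_apply] at this
  rw [hix, hbx] at this
  simp at this

/-- maximal ideals are z-ideals (strong form). -/
theorem zsuper (hM : M.IsMaximal) {f g : C(X, ℝ)} (hf : f ∈ M) (h : ∀ x, f x = 0 → g x = 0) : g ∈ M := by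
  by_contra hg
  obtain ⟨m, hm, hmg⟩ := lemA hM hg
  obtain ⟨x, hfx, hmx⟩ := zero_ex2 hM.ne_top hf hm
  exact hmg x hmx (h x hfx)

/-! ### The filter of zero sets of `M` -/

/-- The filter generated by zero sets of members of `M`. -/
def zfil (M : Ideal C(X, ℝ)) : Filter X :=
  ⨅ m : M, Filter.principal {x | (m : C(X, ℝ)) x = 0}

instance : Nonempty M := ⟨⟨0, M.zero_mem⟩⟩

theorem zfil_directed :
    Directed (· ≥ ·) fun m : M => Filter.principal {x | (m : C(X, ℝ)) x = 0} := by
  rintro ⟨m₁, h₁⟩ ⟨m₂, h₂⟩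
  refine ⟨⟨m₁ * m₁ + m₂ * m₂, M.add_mem (M.mul_mem_left _ h₁) (M.mul_mem_left _ h₂)⟩,
    Filter.principal_mono.2 fun x hx => ?_, Filter.principal_mono.2 fun x hx => ?_⟩ <;>
  · simp only [Set.mem_setOf_eq, ContinuousMap.add_apply, ContinuousMap.mul_apply] at hx ⊢
    nlinarith [mul_self_nonneg (m₁ x), mul_self_nonneg (m₂ x)]

theorem mem_zfil {s : Set X} : s ∈ zfil M ↔ ∃ m ∈ M, {x | m x = 0} ⊆ s := by
  rw [zfil, Filter.mem_iInf_of_directed zfil_directed]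
  constructor
  · rintro ⟨⟨m, hm⟩, h⟩; exact ⟨m, hm, h⟩
  · rintro ⟨m, hm, h⟩; exact ⟨⟨m, hm⟩, h⟩

theorem zfil_neBot (hM : M.IsMaximal) : (zfil M).NeBot := by
  refine Filter.iInf_neBot_of_directed' zfil_directed fun m => ?_
  rw [Filter.principal_neBot_iff]
  obtain ⟨x, hx⟩ := zero_ex hM.ne_top m.2
  exact ⟨x, hx⟩

theorem zset_mem_zfil {m : C(X, ℝ)} (hm : m ∈ M) : {x | m x = 0} ∈ zfil M :=
  mem_zfil.2 ⟨m, hm, subset_rfl⟩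

/-! ### construction of the real-valued character assuming CIP -/

/-- `(f - s)⁺` -/
def ep (f : C(X, ℝ)) (s : ℝ) : C(X, ℝ) :=
  ⟨fun x => max (f x - s) 0, (f.continuous.sub continuous_const).max continuous_const⟩

theorem ep_zero_iff {f : C(X, ℝ)} {s : ℝ} {x : X} : ep f s x = 0 ↔ f x ≤ s := by
  show max (f x - s) 0 = 0 ↔ _
  rw [max_eq_right_iff, sub_nonpos]


/-- the set whose infimum is the character value -/
def bset (M : Ideal C(X, ℝ)) (f : C(X, ℝ)) : Set ℝ := {s | ep f s ∈ M}

theorem bset_nonempty (hM : M.IsMaximal)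
    (hCIP : ∀ a : ℕ → C(X, ℝ), (∀ n, a n ∈ M) → ∃ x, ∀ n, a n x = 0)  (f : C(X, ℝ)) : ∃ n : ℕ, (n : ℝ) ∈ bset M f := by
  by_contra h
  push_neg at h
  have h' : ∀ n : ℕ, ∃ m ∈ M, ∀ x, m x = 0 → ¬ (f x ≤ n) := by
    intro n
    obtain ⟨m, hm, hm'⟩ := lemA hM (h n)
    exact ⟨m, hm, fun x hx hfx => hm' x hx (ep_zero_iff.2 hfx)⟩
  choose m hm hm' using h'
  obtain ⟨x, hx⟩ := hCIP m hm
  obtain ⟨n, hn⟩ := exists_nat_gt (f x)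
  exact hm' n x (hx n) (le_of_lt hn)

theorem bset_bddBelow (hM : M.IsMaximal)
    (hCIP : ∀ a : ℕ → C(X, ℝ), (∀ n, a n ∈ M) → ∃ x, ∀ n, a n x = 0)  (f : C(X, ℝ)) : BddBelow (bset M f) := by
  obtain ⟨n, hn⟩ := bset_nonempty hM hCIP (-f)
  refine ⟨-(n : ℝ), fun s hs => ?_⟩
  obtain ⟨x, h1, h2⟩ := zero_ex2 hM.ne_top hs hn
  have h1' : f x ≤ s := ep_zero_iff.1 h1
  have h2' : (-f) x ≤ n := ep_zero_iff.1 h2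
  simp only [ContinuousMap.neg_apply] at h2'
  linarith

/-- the character value -/
noncomputable def chval (M : Ideal C(X, ℝ)) (f : C(X, ℝ)) : ℝ := sInf (bset M f)

theorem tendsto_chval (hM : M.IsMaximal)
    (hCIP : ∀ a : ℕ → C(X, ℝ), (∀ n, a n ∈ M) → ∃ x, ∀ n, a n x = 0)  (f : C(X, ℝ)) :
    Filter.Tendsto f (zfil M) (nhds (chval M f)) := by
  obtain ⟨n₀, hn₀⟩ := bset_nonempty hM hCIP f
  have hne : (bset M f).Nonempty := ⟨_, hn₀⟩
  have hbdd := bset_bddBelow hM hCIP f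
  have hr : chval M f = sInf (bset M f) := rfl
  rw [Metric.tendsto_nhds]
  intro ε hε
  set r := sInf (bset M f) with hrdef
  rw [hr]
  -- upper bound set
  have hlt : sInf (bset M f) < r + ε := by linarith
  obtain ⟨s, hs, hslt⟩ := (csInf_lt_iff hbdd hne).1 hlt
  -- lower bound set
  have hnotmem : (r - ε) ∉ bset M f := by
    intro hmem
    have := csInf_le hbdd hmem
    linarith
  obtain ⟨m, hm, hm'⟩ := lemA hM hnotmem
  have h1 : {x | ep f s x = 0} ∈ zfil M := zset_mem_zfil hs
  have h2 : {x | m x = 0} ∈ zfil M := zset_mem_zfil hm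
  filter_upwards [h1, h2] with x hx1 hx2
  have hfs : f x ≤ s := ep_zero_iff.1 hx1
  have hfl : ¬ f x ≤ r - ε := fun hc => hm' x hx2 (ep_zero_iff.2 hc)
  rw [Real.dist_eq, abs_lt]
  constructor <;> [linarith; linarith]

/-- the real-valued character -/
noncomputable def chhom (hM : M.IsMaximal)
    (hCIP : ∀ a : ℕ → C(X, ℝ), (∀ n, a n ∈ M) → ∃ x, ∀ n, a n x = 0) : C(X, ℝ) →+* ℝ where
  toFun := chval M
  map_one' := by
    haveI : (zfil M).NeBot := zfil_neBot hM
    refine tendsto_nhds_unique (tendsto_chval hM hCIP 1) ?_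
    exact tendsto_const_nhds.congr (fun x => by simp)
  map_mul' f g := by
    haveI : (zfil M).NeBot := zfil_neBot hM
    refine tendsto_nhds_unique (tendsto_chval hM hCIP (f * g)) ?_
    exact (((tendsto_chval hM hCIP f).mul (tendsto_chval hM hCIP g)).congr
        (fun x => by simp)).congr (fun x => rfl)
  map_zero' := by
    haveI : (zfil M).NeBot := zfil_neBot hM
    refine tendsto_nhds_unique (tendsto_chval hM hCIP 0) ?_
    exact tendsto_const_nhds.congr (fun x => by simp)
  map_add' f g := by
    haveI : (zfil M).NeBot := zfil_neBot hM
    refine tendsto_nhds_unique (tendsto_chval hM hCIP (f + g)) ?_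
    exact ((tendsto_chval hM hCIP f).add (tendsto_chval hM hCIP g)).congr
        (fun x => by simp)

theorem chhom_mem (hM : M.IsMaximal)
    (hCIP : ∀ a : ℕ → C(X, ℝ), (∀ n, a n ∈ M) → ∃ x, ∀ n, a n x = 0)  {f : C(X, ℝ)} (hf : f ∈ M) : chhom hM hCIP f = 0 := by
  haveI : (zfil M).NeBot := zfil_neBot hM
  refine tendsto_nhds_unique (tendsto_chval hM hCIP f) ?_
  refine Filter.Tendsto.congr' ?_ tendsto_const_nhds
  filter_upwards [zset_mem_zfil hf] with x hx using hx.symm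

theorem chhom_const (hM : M.IsMaximal)
    (hCIP : ∀ a : ℕ → C(X, ℝ), (∀ n, a n ∈ M) → ∃ x, ∀ n, a n x = 0)  (c : ℝ) : chhom hM hCIP (ContinuousMap.const X c) = c := by
  haveI : (zfil M).NeBot := zfil_neBot hM
  refine tendsto_nhds_unique (tendsto_chval hM hCIP (ContinuousMap.const X c)) ?_
  exact tendsto_const_nhds.congr (fun x => rfl)

theorem chhom_surjective (hM : M.IsMaximal)
    (hCIP : ∀ a : ℕ → C(X, ℝ), (∀ n, a n ∈ M) → ∃ x, ∀ n, a n x = 0) : Function.Surjective (chhom hM hCIP) :=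
  fun c => ⟨ContinuousMap.const X c, chhom_const hM hCIP c⟩

theorem chhom_ker (hM : M.IsMaximal)
    (hCIP : ∀ a : ℕ → C(X, ℝ), (∀ n, a n ∈ M) → ∃ x, ∀ n, a n x = 0) : M = RingHom.ker (chhom hM hCIP) := by
  refine hM.eq_of_le ?_ (fun f hf => chhom_mem hM hCIP hf)
  intro h
  have h1 : (1 : C(X, ℝ)) ∈ RingHom.ker (chhom hM hCIP) := h ▸ trivial
  rw [RingHom.mem_ker, map_one] at h1
  exact one_ne_zero h1

theorem real_of_CIP (hM : M.IsMaximal)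
    (hCIP : ∀ a : ℕ → C(X, ℝ), (∀ n, a n ∈ M) → ∃ x, ∀ n, a n x = 0) : Nonempty ((C(X, ℝ) ⧸ M) ≃+* ℝ) :=
  ⟨(Ideal.quotEquivOfEq (chhom_ker hM hCIP)).trans
    (RingHom.quotientKerEquivOfSurjective (chhom_surjective hM hCIP))⟩

theorem CIP_of_CSA (hM : M.IsMaximal) (h : CountableStronglyAnnihilated M)
    (a : ℕ → C(X, ℝ)) (ha : ∀ n, a n ∈ M) : ∃ x, ∀ n, a n x = 0 := by
  have h1 : (1 : C(X, ℝ)) ∉ M := fun h1 => hM.ne_top (Ideal.eq_top_iff_one M |>.2 h1)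
  obtain ⟨c, hc, hcb⟩ := h (Set.range a) (Set.countable_range a)
    (by rintro _ ⟨n, rfl⟩; exact ha n) 1 h1
  rw [mul_one] at hcb
  have : ∃ x, c x ≠ 0 := by
    by_contra hx
    push_neg at hx
    exact hcb (ContinuousMap.ext hx)
  obtain ⟨x, hx⟩ := this
  refine ⟨x, fun n => ?_⟩
  have := DFunLike.congr_fun (hc (a n) (Set.mem_range_self n)) x
  simp only [ContinuousMap.mul_apply, ContinuousMap.zero_apply] at this
  rcases mul_eq_zero.1 this with h | h
  · exact absurd h hx
  · exact h

/-! ### the converse direction -/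

/-- the character obtained from an isomorphism of the quotient with `ℝ` -/
noncomputable def psi (M : Ideal C(X, ℝ)) (e : (C(X, ℝ) ⧸ M) ≃+* ℝ) : C(X, ℝ) →+* ℝ :=
  (e : (C(X, ℝ) ⧸ M) →+* ℝ).comp (Ideal.Quotient.mk M)

theorem psi_zero_iff (e : (C(X, ℝ) ⧸ M) ≃+* ℝ) {f : C(X, ℝ)} :
    psi M e f = 0 ↔ f ∈ M := by
  rw [← Ideal.Quotient.eq_zero_iff_mem]
  have h0 : psi M e f = e (Ideal.Quotient.mk M f) := rfl
  rw [h0, ← map_zero e, e.injective.eq_iff]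

theorem psi_const (e : (C(X, ℝ) ⧸ M) ≃+* ℝ) (c : ℝ) :
    psi M e (ContinuousMap.const X c) = c := by
  have h1 : ContinuousMap.const X c = algebraMap ℝ C(X, ℝ) c := by
    ext x
    simp [Algebra.algebraMap_eq_smul_one]
  have h2 : (psi M e).comp (algebraMap ℝ C(X, ℝ)) = RingHom.id ℝ := Subsingleton.elim _ _
  rw [h1]
  exact RingHom.congr_fun h2 c

theorem psi_nonneg (e : (C(X, ℝ) ⧸ M) ≃+* ℝ) {f : C(X, ℝ)} (hf : ∀ x, 0 ≤ f x) :
    0 ≤ psi M e f := by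
  set s : C(X, ℝ) := ⟨fun x => Real.sqrt (f x), Real.continuous_sqrt.comp f.continuous⟩ with hs
  have hss : s * s = f := by
    ext x
    exact Real.mul_self_sqrt (hf x)
  calc (0:ℝ) ≤ psi M e s * psi M e s := mul_self_nonneg _
  _ = psi M e (s * s) := (map_mul _ _ _).symm
  _ = psi M e f := by rw [hss]

theorem psi_le_const (e : (C(X, ℝ) ⧸ M) ≃+* ℝ) {f : C(X, ℝ)} {c : ℝ}
    (hf : ∀ x, f x ≤ c) : psi M e f ≤ c := by
  have h := psi_nonneg e (f := ContinuousMap.const X c - f)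
    (fun x => by simpa using hf x)
  have := psi_const e c
  rw [map_sub] at h
  linarith

/-- key construction: a single member of `M` whose zero set is the intersection of the
zero sets of countably many members. -/
theorem exists_G (hM : M.IsMaximal) (e : (C(X, ℝ) ⧸ M) ≃+* ℝ)
    (a : ℕ → C(X, ℝ)) (ha : ∀ n, a n ∈ M) :
    ∃ G : C(X, ℝ), G ∈ M ∧ ∀ x, (G x = 0 ↔ ∀ n, a n x = 0) := by
  set t : ℕ → X → ℝ := fun n x => ((2:ℝ)⁻¹) ^ n * min |a n x| 1 with ht
  have ht_cont : ∀ n, Continuous (t n) := fun n =>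
    continuous_const.mul (((a n).continuous.abs).min continuous_const)
  have htnonneg : ∀ n x, 0 ≤ t n x := fun n x => by
    apply mul_nonneg (by positivity)
    exact le_min (abs_nonneg _) zero_le_one
  have htle : ∀ n x, t n x ≤ ((2:ℝ)⁻¹) ^ n := fun n x => by
    have : min |a n x| 1 ≤ 1 := min_le_right _ _
    calc t n x ≤ ((2:ℝ)⁻¹) ^ n * 1 := by
          apply mul_le_mul_of_nonneg_left this (by positivity)
      _ = ((2:ℝ)⁻¹) ^ n := mul_one _
  have hu : Summable fun n : ℕ => ((2:ℝ)⁻¹) ^ n :=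
    summable_geometric_of_lt_one (by norm_num) (by norm_num)
  have hbound : ∀ n x, ‖t n x‖ ≤ ((2:ℝ)⁻¹) ^ n := fun n x => by
    rw [Real.norm_eq_abs, abs_of_nonneg (htnonneg n x)]
    exact htle n x
  have hg : Continuous fun x => ∑' n, t n x := continuous_tsum ht_cont hu hbound
  have hsx : ∀ x, Summable fun n => t n x := fun x =>
    Summable.of_nonneg_of_le (fun n => htnonneg n x) (fun n => htle n x) hu
  set G : C(X, ℝ) := ⟨fun x => ∑' n, t n x, hg⟩ with hG
  have hGzero : ∀ x, G x = 0 ↔ ∀ n, a n x = 0 := by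
    intro x
    constructor
    · intro h n
      have h1 : t n x ≤ 0 := by
        calc t n x ≤ ∑' m, t m x := Summable.le_tsum (hsx x) n (fun m _ => htnonneg m x)
        _ = 0 := h
      have h2 : t n x = 0 := le_antisymm h1 (htnonneg n x)
      have h3 : min |a n x| 1 = 0 := by
        rcases mul_eq_zero.1 h2 with h | h
        · exact absurd h (by positivity)
        · exact h
      rcases le_or_gt |a n x| 1 with h4 | h4
      · rw [min_eq_left h4] at h3
        exact abs_eq_zero.1 h3
      · rw [min_eq_right h4.le] at h3
        norm_num at h3
    · intro h
      show (∑' n, t n x) = 0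
      have : ∀ n, t n x = 0 := fun n => by simp [ht, h n]
      simp [this]
  refine ⟨G, ?_, hGzero⟩
  -- show `G ∈ M` using `psi`
  rw [← psi_zero_iff e]
  set tC : ℕ → C(X, ℝ) := fun n => ⟨t n, ht_cont n⟩ with htC
  have htCM : ∀ n, tC n ∈ M := fun n =>
    zsuper hM (ha n) (fun x hx => by simp [htC, ht, hx])
  have key : ∀ N : ℕ, 0 ≤ psi M e G ∧ psi M e G ≤ ((2:ℝ)⁻¹) ^ N * 2 := by
    intro N
    set P : C(X, ℝ) := ∑ n ∈ Finset.range N, tC n with hP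
    have hPM : P ∈ M := Ideal.sum_mem M (fun n _ => htCM n)
    have hPx : ∀ x, P x = ∑ n ∈ Finset.range N, t n x := fun x => by
      simp [hP, htC]
    have hTx : ∀ x, (G - P) x = ∑' i, t (i + N) x := fun x => by
      have h0 := Summable.sum_add_tsum_nat_add (f := fun n => t n x) N (hsx x)
      have : (G - P) x = G x - P x := rfl
      rw [this, hPx]
      show (∑' n, t n x) - _ = _
      linarith
    have htailsum : Summable fun i : ℕ => ((2:ℝ)⁻¹) ^ (i + N) := by
      have : (fun i : ℕ => ((2:ℝ)⁻¹) ^ (i + N)) =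
          fun i : ℕ => ((2:ℝ)⁻¹) ^ N * ((2:ℝ)⁻¹) ^ i := by
        funext i
        rw [pow_add, mul_comm]
      rw [this]
      exact hu.mul_left _
    have htailval : ∑' i : ℕ, ((2:ℝ)⁻¹) ^ (i + N) = ((2:ℝ)⁻¹) ^ N * 2 := by
      have h1 : (fun i : ℕ => ((2:ℝ)⁻¹) ^ (i + N)) =
          fun i : ℕ => ((2:ℝ)⁻¹) ^ N * ((2:ℝ)⁻¹) ^ i := by
        funext i
        rw [pow_add, mul_comm]
      rw [h1, tsum_mul_left, tsum_geometric_of_lt_one (by norm_num) (by norm_num)]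
      norm_num
    have hTnonneg : ∀ x, 0 ≤ (G - P) x := fun x => by
      rw [hTx]
      exact tsum_nonneg (fun i => htnonneg _ x)
    have hTle : ∀ x, (G - P) x ≤ ((2:ℝ)⁻¹) ^ N * 2 := fun x => by
      rw [hTx, ← htailval]
      refine Summable.tsum_le_tsum (fun i => htle _ x) ?_ htailsum
      exact Summable.of_nonneg_of_le (fun i => htnonneg _ x) (fun i => htle _ x) htailsum
    have hpsiP : psi M e P = 0 := (psi_zero_iff e).2 hPM
    have hsplit : psi M e G = psi M e (G - P) := by
      rw [map_sub, hpsiP, sub_zero]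
    constructor
    · rw [hsplit]
      exact psi_nonneg e hTnonneg
    · rw [hsplit]
      exact psi_le_const e hTle
  have hge : 0 ≤ psi M e G := (key 0).1
  have hle : psi M e G ≤ 0 := by
    have htend : Filter.Tendsto (fun N : ℕ => ((2:ℝ)⁻¹) ^ N * 2) Filter.atTop (nhds 0) := by
      have := (tendsto_pow_atTop_nhds_zero_of_lt_one (r := (2:ℝ)⁻¹)
        (by norm_num) (by norm_num)).mul_const (2:ℝ)
      simpa using this
    exact ge_of_tendsto htend (Filter.Eventually.of_forall fun N => (key N).2)
  linarith

end Stmt15Aux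

/-- A maximal ideal `M` of `C(X)` is countable strongly annihilated iff it is a
`z°`-ideal and a real maximal ideal (`C(X)/M ≅ ℝ`). -/
theorem stmt15 {X : Type*} [TopologicalSpace X] [T2Space X] [CompletelyRegularSpace X]
    (M : Ideal C(X, ℝ)) (hM : M.IsMaximal) :
    CountableStronglyAnnihilated M ↔
      ((∀ f ∈ M, ∀ g : C(X, ℝ),
          interior {x | f x = 0} = interior {x | g x = 0} → g ∈ M) ∧
        Nonempty ((C(X, ℝ) ⧸ M) ≃+* ℝ)) := by
  constructor
  · intro hCSA
    constructor
    · intro f hf g hint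
      by_contra hg
      obtain ⟨c, hc, hcb⟩ := hCSA {f} (Set.countable_singleton f)
        (Set.singleton_subset_iff.2 hf) g hg
      have hcf : c * f = 0 := hc f rfl
      apply hcb
      ext x
      simp only [ContinuousMap.mul_apply, ContinuousMap.zero_apply]
      by_cases hx : c x = 0
      · rw [hx, zero_mul]
      · have hopen : IsOpen {y | c y ≠ 0} := by
          have : {y | c y ≠ 0} = c ⁻¹' ({0}ᶜ) := rfl
          rw [this]
          exact c.continuous.isOpen_preimage _ isOpen_compl_singleton
        have hsub : {y | c y ≠ 0} ⊆ {y | f y = 0} := by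
          intro y hy
          have := DFunLike.congr_fun hcf y
          simp only [ContinuousMap.mul_apply, ContinuousMap.zero_apply] at this
          rcases mul_eq_zero.1 this with h | h
          · exact absurd h hy
          · exact h
        have hxm : x ∈ interior {y | f y = 0} := interior_maximal hsub hopen hx
        rw [hint] at hxm
        rw [interior_subset hxm, mul_zero]
    · exact Stmt15Aux.real_of_CIP hM (Stmt15Aux.CIP_of_CSA hM hCSA)
  · rintro ⟨hz, ⟨e⟩⟩
    intro S hScount hSsub b hb
    obtain ⟨a, haM, haS⟩ : ∃ a : ℕ → C(X, ℝ), (∀ n, a n ∈ M) ∧ ∀ s ∈ S, ∃ n, a n = s := by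
      rcases S.eq_empty_or_nonempty with rfl | hne
      · exact ⟨fun _ => 0, fun _ => M.zero_mem, by simp⟩
      · obtain ⟨a, ha⟩ := hScount.exists_eq_range hne
        refine ⟨a, fun n => hSsub (ha ▸ Set.mem_range_self n), fun s hs => ?_⟩
        rw [ha] at hs
        exact hs
    obtain ⟨G, hGM, hGzero⟩ := Stmt15Aux.exists_G hM e a haM
    by_cases hsub : interior {x | G x = 0} ⊆ {x | b x = 0}
    · exfalso
      have hGG : G * G ∈ M := M.mul_mem_left G hGM
      have hZk : {x | (G * G + b * b) x = 0} = {x | G x = 0} ∩ {x | b x = 0} := by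
        ext x
        simp only [ContinuousMap.add_apply, ContinuousMap.mul_apply, Set.mem_setOf_eq,
          Set.mem_inter_iff]
        constructor
        · intro h
          constructor <;> nlinarith [mul_self_nonneg (G x), mul_self_nonneg (b x)]
        · rintro ⟨h1, h2⟩
          rw [h1, h2]
          ring
      have hik : interior {x | G x = 0} = interior {x | (G * G + b * b) x = 0} := by
        rw [hZk, interior_inter]
        have : interior {x | G x = 0} ⊆ interior {x | b x = 0} :=
          interior_maximal hsub isOpen_interior
        exact (Set.inter_eq_self_of_subset_left this).symm
      have hk : G * G + b * b ∈ M := hz G hGM _ hik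
      have hbb : b * b ∈ M := by
        have : b * b = (G * G + b * b) - G * G := by ring
        rw [this]
        exact M.sub_mem hk hGG
      rcases hM.isPrime.mem_or_mem hbb with h | h <;> exact hb h
    · obtain ⟨x₀, hx₀i, hx₀b⟩ : ∃ x, x ∈ interior {x | G x = 0} ∧ b x ≠ 0 := by
        rcases Set.not_subset.1 hsub with ⟨x, hx1, hx2⟩
        exact ⟨x, hx1, hx2⟩
      obtain ⟨u, hu_cont, hu0, hu1⟩ := CompletelyRegularSpace.completely_regular x₀
        ((interior {x | G x = 0})ᶜ) isOpen_interior.isClosed_compl (by simpa using hx₀i)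
      set c : C(X, ℝ) := ⟨fun y => 1 - (u y : ℝ),
        continuous_const.sub (continuous_subtype_val.comp hu_cont)⟩ with hcdef
      refine ⟨c, ?_, ?_⟩
      · intro s hs
        obtain ⟨n, rfl⟩ := haS s hs
        ext x
        simp only [ContinuousMap.mul_apply, ContinuousMap.zero_apply]
        by_cases hx : x ∈ interior {x | G x = 0}
        · have h1 : x ∈ {y | G y = 0} := interior_subset hx
          rw [(hGzero x).1 h1 n, mul_zero]
        · have h2 : u x = 1 := hu1 hx
          have h3 : c x = 0 := by
            show 1 - (u x : ℝ) = 0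
            rw [h2]
            norm_num
          rw [h3, zero_mul]
      · intro h0
        have := DFunLike.congr_fun h0 x₀
        simp only [ContinuousMap.mul_apply, ContinuousMap.zero_apply] at this
        have hc0 : c x₀ = 1 := by
          show 1 - (u x₀ : ℝ) = 1
          rw [hu0]
          norm_num
        rw [hc0, one_mul] at this
        exact hx₀b this
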